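/- Let S and W be discrete semigroups each with an identity element, with nets E = ⟨E_i⟩_{i∈I} in P_f(S) and F = ⟨F_j⟩_{j∈J} in P_f(W). Define the product net E*F = ⟨E_i × F_j⟩_{(i,j)∈I×J} with the product partial order on I×J. Then for all A ⊆ S and B ⊆ W, d*_{E*F}(A × B) = d*_E(A) · d*_F(B). -/

import Mathlib

open scoped Classical symmDiff

/-- The translate `F · s` of a finite piece `F` by an element of `S ∪ {1}`
(`none` meaning "no shift"). -/
def netShift {S : Type*} [Mul S] (F : Set S) : Option S → Set S
  | none => F
  | some t => (· * t) '' F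

/-- Upper Banach density of `A ⊆ S` with respect to a net `F = ⟨F i⟩` of finite
nonempty subsets of `S`, indexed by a directed preorder `I`. -/
noncomputable def uBD {S : Type*} [Mul S] {I : Type*} [Preorder I]
    (F : I → Set S) (A : Set S) : ℝ :=
  sSup {α : ℝ | ∀ i₀ : I, ∃ i, i₀ ≤ i ∧ ∃ s : Option S,
    α * ((F i).ncard : ℝ) ≤ ((A ∩ netShift (F i) s).ncard : ℝ)}

section aux

lemma netShift_finite {S : Type*} [Mul S] {F : Set S} (hF : F.Finite) (s : Option S) :
    (netShift F s).Finite := by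
  cases s with
  | none => exact hF
  | some t => exact hF.image _

lemma netShift_ncard_le {S : Type*} [Mul S] {F : Set S} (hF : F.Finite) (s : Option S) :
    (netShift F s).ncard ≤ F.ncard := by
  cases s with
  | none => exact le_rfl
  | some t => exact Set.ncard_image_le hF

lemma netShift_getD {S : Type*} [Monoid S] (F : Set S) (s : Option S) :
    netShift F (some (s.getD 1)) = netShift F s := by
  cases s with
  | none => simp [netShift]
  | some t => rfl

lemma netShift_prod {S W : Type*} [Mul S] [Mul W] (E : Set S) (F : Set W)
    (p : Option (S × W)) :
    netShift (E ×ˢ F) p = netShift E (p.map Prod.fst) ×ˢ netShift F (p.map Prod.snd) := by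
  cases p with
  | none => rfl
  | some st =>
    obtain ⟨s, t⟩ := st
    show (fun x => x * (s, t)) '' (E ×ˢ F) = ((· * s) '' E) ×ˢ ((· * t) '' F)
    rw [Set.prod_image_image_eq]
    rfl

lemma ncard_prod {S W : Type*} (s : Set S) (t : Set W) :
    (s ×ˢ t).ncard = s.ncard * t.ncard := by
  rw [← Nat.card_coe_set_eq, ← Nat.card_coe_set_eq, ← Nat.card_coe_set_eq,
    ← Nat.card_prod]
  exact Nat.card_congr (Equiv.Set.prod s t)

/-- `0` belongs to the defining set of `uBD`. -/
lemma zero_mem_uBD_set {S : Type*} [Mul S] {I : Type*} [Preorder I] (F : I → Set S)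
    (A : Set S) :
    (0 : ℝ) ∈ {α : ℝ | ∀ i₀ : I, ∃ i, i₀ ≤ i ∧ ∃ s : Option S,
      α * ((F i).ncard : ℝ) ≤ ((A ∩ netShift (F i) s).ncard : ℝ)} := by
  intro i₀
  exact ⟨i₀, le_rfl, none, by simp⟩

lemma bddAbove_uBD_set {S : Type*} [Mul S] {I : Type*} [Preorder I] [Nonempty I]
    (F : I → Set S) (hFfin : ∀ i, (F i).Finite) (hFne : ∀ i, (F i).Nonempty) (A : Set S) :
    BddAbove {α : ℝ | ∀ i₀ : I, ∃ i, i₀ ≤ i ∧ ∃ s : Option S,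
      α * ((F i).ncard : ℝ) ≤ ((A ∩ netShift (F i) s).ncard : ℝ)} := by
  refine ⟨1, fun α hα => ?_⟩
  obtain ⟨i, -, s, hs⟩ := hα (Classical.arbitrary I)
  have h1 : ((A ∩ netShift (F i) s).ncard : ℝ) ≤ ((F i).ncard : ℝ) := by
    exact_mod_cast le_trans
      (Set.ncard_le_ncard Set.inter_subset_right (netShift_finite (hFfin i) s))
      (netShift_ncard_le (hFfin i) s)
  have hpos : (0 : ℝ) < ((F i).ncard : ℝ) := by
    exact_mod_cast (Set.ncard_pos (hFfin i)).mpr (hFne i)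
  nlinarith [le_trans hs h1]

lemma uBD_nonneg {S : Type*} [Mul S] {I : Type*} [Preorder I] [Nonempty I]
    (F : I → Set S) (hFfin : ∀ i, (F i).Finite) (hFne : ∀ i, (F i).Nonempty) (A : Set S) :
    0 ≤ uBD F A :=
  le_csSup (bddAbove_uBD_set F hFfin hFne A) (zero_mem_uBD_set F A)

end aux

theorem uBD_prod {S W : Type*} [Monoid S] [Monoid W]
    {I J : Type*} [Preorder I] [Preorder J] [Nonempty I] [Nonempty J]
    (E : I → Set S) (F : J → Set W)
    (hEfin : ∀ i, (E i).Finite) (hEne : ∀ i, (E i).Nonempty)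
    (hFfin : ∀ j, (F j).Finite) (hFne : ∀ j, (F j).Nonempty)
    (hIdir : ∀ i j : I, ∃ k, i ≤ k ∧ j ≤ k) (hJdir : ∀ i j : J, ∃ k, i ≤ k ∧ j ≤ k)
    (A : Set S) (B : Set W) :
    uBD (fun p : I × J => E p.1 ×ˢ F p.2) (A ×ˢ B) = uBD E A * uBD F B := by
  set SA := {α : ℝ | ∀ i₀ : I, ∃ i, i₀ ≤ i ∧ ∃ s : Option S,
    α * ((E i).ncard : ℝ) ≤ ((A ∩ netShift (E i) s).ncard : ℝ)} with hSA
  set SB := {β : ℝ | ∀ j₀ : J, ∃ j, j₀ ≤ j ∧ ∃ t : Option W,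
    β * ((F j).ncard : ℝ) ≤ ((B ∩ netShift (F j) t).ncard : ℝ)} with hSB
  set SAB := {γ : ℝ | ∀ p₀ : I × J, ∃ p, p₀ ≤ p ∧ ∃ q : Option (S × W),
    γ * (((E p.1 ×ˢ F p.2 : Set (S × W))).ncard : ℝ) ≤
      (((A ×ˢ B) ∩ netShift (E p.1 ×ˢ F p.2) q).ncard : ℝ)} with hSAB
  have hEFfin : ∀ p : I × J, (E p.1 ×ˢ F p.2 : Set (S × W)).Finite :=
    fun p => (hEfin p.1).prod (hFfin p.2)
  have hEFne : ∀ p : I × J, (E p.1 ×ˢ F p.2 : Set (S × W)).Nonempty :=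
    fun p => (hEne p.1).prod (hFne p.2)
  have hbdA := bddAbove_uBD_set E hEfin hEne A
  have hbdB := bddAbove_uBD_set F hFfin hFne B
  have hbdAB := bddAbove_uBD_set (fun p : I × J => E p.1 ×ˢ F p.2) hEFfin hEFne (A ×ˢ B)
  have hA0 : 0 ≤ uBD E A := uBD_nonneg E hEfin hEne A
  have hB0 : 0 ≤ uBD F B := uBD_nonneg F hFfin hFne B
  -- key factorization: intersections with shifted product pieces split
  have hfact : ∀ (i : I) (j : J) (q : Option (S × W)),
      ((A ×ˢ B) ∩ netShift (E i ×ˢ F j) q).ncard =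
        (A ∩ netShift (E i) (q.map Prod.fst)).ncard *
          (B ∩ netShift (F j) (q.map Prod.snd)).ncard := by
    intro i j q
    rw [netShift_prod, Set.prod_inter_prod, ncard_prod]
  -- upper bound: uBD of the product ≤ product of uBDs
  have hle : uBD (fun p : I × J => E p.1 ×ˢ F p.2) (A ×ˢ B) ≤ uBD E A * uBD F B := by
    apply csSup_le ⟨0, zero_mem_uBD_set _ _⟩
    intro γ hγ
    have key : ∀ ε : ℝ, 0 < ε → γ ≤ (uBD E A + ε) * (uBD F B + ε) := by
      intro ε hε
      -- eventual bounds
      have hAe : ∃ i₀ : I, ∀ i, i₀ ≤ i → ∀ s : Option S,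
          ((A ∩ netShift (E i) s).ncard : ℝ) < (uBD E A + ε) * ((E i).ncard : ℝ) := by
        by_contra h
        push_neg at h
        have hmem : uBD E A + ε ∈ SA := by
          intro i₀
          obtain ⟨i, hi, s, hs⟩ := h i₀
          exact ⟨i, hi, s, hs⟩
        have := le_csSup hbdA hmem
        simp only [uBD] at this
        linarith
      have hBe : ∃ j₀ : J, ∀ j, j₀ ≤ j → ∀ t : Option W,
          ((B ∩ netShift (F j) t).ncard : ℝ) < (uBD F B + ε) * ((F j).ncard : ℝ) := by
        by_contra h
        push_neg at h
        have hmem : uBD F B + ε ∈ SB := by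
          intro j₀
          obtain ⟨j, hj, t, ht⟩ := h j₀
          exact ⟨j, hj, t, ht⟩
        have := le_csSup hbdB hmem
        simp only [uBD] at this
        linarith
      obtain ⟨i₀, hi₀⟩ := hAe
      obtain ⟨j₀, hj₀⟩ := hBe
      obtain ⟨⟨i, j⟩, ⟨hi, hj⟩, q, hq⟩ := hγ (i₀, j₀)
      have hEc : (0:ℝ) < ((E i).ncard : ℝ) := by
        exact_mod_cast (Set.ncard_pos (hEfin i)).mpr (hEne i)
      have hFc : (0:ℝ) < ((F j).ncard : ℝ) := by
        exact_mod_cast (Set.ncard_pos (hFfin j)).mpr (hFne j)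
      have h1 := hi₀ i hi (q.map Prod.fst)
      have h2 := hj₀ j hj (q.map Prod.snd)
      rw [hfact i j q] at hq
      push_cast at hq
      have hcard : ((E i ×ˢ F j : Set (S × W)).ncard : ℝ) =
          ((E i).ncard : ℝ) * ((F j).ncard : ℝ) := by
        rw [ncard_prod]; push_cast; ring
      rw [hcard] at hq
      have hna : (0:ℝ) ≤ ((A ∩ netShift (E i) (q.map Prod.fst)).ncard : ℝ) := by positivity
      have hnb : (0:ℝ) ≤ ((B ∩ netShift (F j) (q.map Prod.snd)).ncard : ℝ) := by positivity
      have hprod : ((A ∩ netShift (E i) (q.map Prod.fst)).ncard : ℝ) *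
          ((B ∩ netShift (F j) (q.map Prod.snd)).ncard : ℝ) <
          ((uBD E A + ε) * ((E i).ncard : ℝ)) * ((uBD F B + ε) * ((F j).ncard : ℝ)) := by
        apply mul_lt_mul' h1.le h2 hnb
        positivity
      have : γ * (((E i).ncard : ℝ) * ((F j).ncard : ℝ)) <
          (uBD E A + ε) * (uBD F B + ε) * (((E i).ncard : ℝ) * ((F j).ncard : ℝ)) := by
        calc γ * (((E i).ncard : ℝ) * ((F j).ncard : ℝ)) ≤ _ := hq
          _ < _ := by nlinarith [hprod]
      have hpos : (0:ℝ) < ((E i).ncard : ℝ) * ((F j).ncard : ℝ) := by positivity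
      exact le_of_lt (lt_of_mul_lt_mul_right this hpos.le)
    -- take ε → 0
    have htend : Filter.Tendsto (fun ε : ℝ => (uBD E A + ε) * (uBD F B + ε))
        (nhdsWithin 0 (Set.Ioi 0)) (nhds (uBD E A * uBD F B)) := by
      have : Filter.Tendsto (fun ε : ℝ => (uBD E A + ε) * (uBD F B + ε))
          (nhds 0) (nhds ((uBD E A + 0) * (uBD F B + 0))) := by
        apply Filter.Tendsto.mul <;> exact (continuous_const.add continuous_id).tendsto 0
      simpa using this.mono_left nhdsWithin_le_nhds
    refine ge_of_tendsto htend ?_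
    filter_upwards [self_mem_nhdsWithin] with ε hε
    exact key ε hε
  -- lower bound
  have hge : uBD E A * uBD F B ≤ uBD (fun p : I × J => E p.1 ×ˢ F p.2) (A ×ˢ B) := by
    have hmul : ∀ α ∈ SA, ∀ β ∈ SB, 0 ≤ α → 0 ≤ β → α * β ∈ SAB := by
      intro α hα β hβ hα0 hβ0 ⟨i₀, j₀⟩
      obtain ⟨i, hi, s, hs⟩ := hα i₀
      obtain ⟨j, hj, t, ht⟩ := hβ j₀
      refine ⟨(i, j), ⟨hi, hj⟩, some (s.getD 1, t.getD 1), ?_⟩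
      have hq : ((A ×ˢ B) ∩ netShift (E i ×ˢ F j) (some (s.getD 1, t.getD 1))).ncard =
          (A ∩ netShift (E i) s).ncard * (B ∩ netShift (F j) t).ncard := by
        rw [hfact]
        simp only [Option.map_some]
        rw [netShift_getD, netShift_getD]
      rw [hq]
      have hcard : ((E i ×ˢ F j : Set (S × W)).ncard : ℝ) =
          ((E i).ncard : ℝ) * ((F j).ncard : ℝ) := by
        rw [ncard_prod]; push_cast; ring
      rw [hcard]
      push_cast
      calc α * β * (((E i).ncard : ℝ) * ((F j).ncard : ℝ))
          = (α * ((E i).ncard : ℝ)) * (β * ((F j).ncard : ℝ)) := by ring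
        _ ≤ ((A ∩ netShift (E i) s).ncard : ℝ) * ((B ∩ netShift (F j) t).ncard : ℝ) := by
            apply mul_le_mul hs ht (by positivity) (by positivity)
    rcases le_or_gt (uBD E A * uBD F B) 0 with h | h
    · exact h.trans (uBD_nonneg _ hEFfin hEFne _)
    have hdA : 0 < uBD E A := by nlinarith
    have hdB : 0 < uBD F B := by nlinarith
    apply le_of_forall_lt
    intro c hc
    have h1 : max (c / uBD F B) 0 < uBD E A := by
      apply max_lt _ hdA
      rw [div_lt_iff₀ hdB]; nlinarith
    obtain ⟨α, hαmem, hα⟩ := exists_lt_of_lt_csSup ⟨0, zero_mem_uBD_set E A⟩ h1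
    have hα0 : 0 < α := lt_of_le_of_lt (le_max_right _ _) hα
    have hαc : c < α * uBD F B := by
      have := lt_of_le_of_lt (le_max_left (c / uBD F B) 0) hα
      calc c = c / uBD F B * uBD F B := by field_simp
        _ < α * uBD F B := mul_lt_mul_of_pos_right this hdB
    have h2 : max (c / α) 0 < uBD F B := by
      apply max_lt _ hdB
      rw [div_lt_iff₀ hα0]; nlinarith
    obtain ⟨β, hβmem, hβ⟩ := exists_lt_of_lt_csSup ⟨0, zero_mem_uBD_set F B⟩ h2
    have hβ0 : 0 < β := lt_of_le_of_lt (le_max_right _ _) hβ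
    have hβc : c < α * β := by
      have := lt_of_le_of_lt (le_max_left (c / α) 0) hβ
      calc c = c / α * α := by field_simp
        _ < β * α := mul_lt_mul_of_pos_right this hα0
        _ = α * β := mul_comm _ _
    exact lt_of_lt_of_le hβc (le_csSup hbdAB (hmul α hαmem β hβmem hα0.le hβ0.le))
  linarith
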